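/- Let q ≤ 1/2. If Q(y − y^δ) ∈ N_{2q}, then there exists C > 0 such that ψ_HD(α, y − y^δ) ≥ C ‖x_α^δ − x_α‖ for all α ∈ (0,‖T‖²). -/

import Mathlib

open scoped BigOperators
open Set

noncomputable section

namespace WeakNoise

/-! ### Sequence (spectral/diagonal) model of the weakly bounded noise setting

Since `T : X → Y` is a compact linear operator, `T T*` and `T* T` have a common
sequence of positive eigenvalues `lam i`, bounded by `Λ = ‖T‖²`, with
orthonormal eigenbases `u i` (of `T T*`, spanning `closure (range T)`) and
`v i` (of `T* T`, spanning `(ker T)ᗮ`).  We describe all data by their spectral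
coefficients: `e i = ⟪y^δ - y, u i⟫` (so `y - y^δ` has coefficients `-e i`,
with the same squares), and `xdag i = ⟪x†, v i⟫` (note `x† ⟂ ker T`), so that
the exact data `y = T x†` has coefficients `√(lam i) * xdag i`.  All norms,
functionals and conditions of the paper are expressed through their spectral
representations `∫ w(λ) d‖F_λ z‖² = ∑' i, w (lam i) * (coefficient of z at i)²`. -/

/-- squared weak noise level `η² = ‖(T T*)^p (y^δ - y)‖² = ∑ λᵢ^{2p} eᵢ²`. -/
def etaSq (lam e : ℕ → ℝ) (p : ℝ) : ℝ := ∑' i, lam i ^ (2 * p) * e i ^ 2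

/-- weak noise level `η = ‖(T T*)^p (y^δ - y)‖`. -/
def eta (lam e : ℕ → ℝ) (p : ℝ) : ℝ := Real.sqrt (etaSq lam e p)

/-- `‖x_α^δ - x_α‖² = ∑ λᵢ eᵢ²/(λᵢ+α)²`. -/
def dataErrSq (lam e : ℕ → ℝ) (α : ℝ) : ℝ := ∑' i, lam i * e i ^ 2 / (lam i + α) ^ 2

/-- `‖x_α^δ - x_α‖`. -/
def dataErr (lam e : ℕ → ℝ) (α : ℝ) : ℝ := Real.sqrt (dataErrSq lam e α)

/-- `‖x_α - x†‖² = ∑ α² xdagᵢ²/(λᵢ+α)²`. -/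
def approxErrSq (lam xdag : ℕ → ℝ) (α : ℝ) : ℝ := ∑' i, α ^ 2 * xdag i ^ 2 / (lam i + α) ^ 2

/-- `‖x_α - x†‖`. -/
def approxErr (lam xdag : ℕ → ℝ) (α : ℝ) : ℝ := Real.sqrt (approxErrSq lam xdag α)

/-- `‖T (x_α^δ - x_α)‖² = ∑ λᵢ² eᵢ²/(λᵢ+α)²`. -/
def TdataErrSq (lam e : ℕ → ℝ) (α : ℝ) : ℝ := ∑' i, lam i ^ 2 * e i ^ 2 / (lam i + α) ^ 2

/-- `‖T (x_α^δ - x_α)‖`. -/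
def TdataErr (lam e : ℕ → ℝ) (α : ℝ) : ℝ := Real.sqrt (TdataErrSq lam e α)

/-- `‖T x_α - y‖² = ∑ α² λᵢ xdagᵢ²/(λᵢ+α)²`. -/
def TapproxErrSq (lam xdag : ℕ → ℝ) (α : ℝ) : ℝ :=
  ∑' i, α ^ 2 * lam i * xdag i ^ 2 / (lam i + α) ^ 2

/-- `‖T x_α - y‖`. -/
def TapproxErr (lam xdag : ℕ → ℝ) (α : ℝ) : ℝ := Real.sqrt (TapproxErrSq lam xdag α)

/-- `‖x_α^δ - x†‖² = ∑ (√λᵢ eᵢ - α xdagᵢ)²/(λᵢ+α)²`. -/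
def totalErrSq (lam xdag e : ℕ → ℝ) (α : ℝ) : ℝ :=
  ∑' i, (Real.sqrt (lam i) * e i - α * xdag i) ^ 2 / (lam i + α) ^ 2

/-- `‖x_α^δ - x†‖`. -/
def totalErr (lam xdag e : ℕ → ℝ) (α : ℝ) : ℝ := Real.sqrt (totalErrSq lam xdag e α)

/-- spectral coefficients of the exact data `y = T x†`. -/
def yCoeff (lam xdag : ℕ → ℝ) : ℕ → ℝ := fun i => Real.sqrt (lam i) * xdag i

/-- spectral coefficients of the noisy data `y^δ`. -/
def ydCoeff (lam xdag e : ℕ → ℝ) : ℕ → ℝ := fun i => Real.sqrt (lam i) * xdag i + e i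

/-- squared quasi-optimality functional `ψ_QO(α,z)² = ∑ α² λᵢ cᵢ²/(λᵢ+α)⁴`,
where `c` are the spectral coefficients of `z`. -/
def psiQOsq (lam c : ℕ → ℝ) (α : ℝ) : ℝ := ∑' i, α ^ 2 * lam i * c i ^ 2 / (lam i + α) ^ 4

/-- quasi-optimality functional `ψ_QO(α,z)`. -/
def psiQO (lam c : ℕ → ℝ) (α : ℝ) : ℝ := Real.sqrt (psiQOsq lam c α)

/-- squared modified heuristic discrepancy functional
`ψ_HD(α,z)² = ∑ λᵢ^{2q} α^{1-2q} cᵢ²/(λᵢ+α)²`. -/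
def psiHDsq (lam c : ℕ → ℝ) (q α : ℝ) : ℝ :=
  ∑' i, lam i ^ (2 * q) * α ^ (1 - 2 * q) * c i ^ 2 / (lam i + α) ^ 2

/-- modified heuristic discrepancy functional `ψ_HD(α,z)`. -/
def psiHD (lam c : ℕ → ℝ) (q α : ℝ) : ℝ := Real.sqrt (psiHDsq lam c q α)

/-- squared modified Hanke-Raus functional
`ψ_HR(α,z)² = ∑ λᵢ^{2q} α^{2-2q} cᵢ²/(λᵢ+α)³`. -/
def psiHRsq (lam c : ℕ → ℝ) (q α : ℝ) : ℝ :=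
  ∑' i, lam i ^ (2 * q) * α ^ (2 - 2 * q) * c i ^ 2 / (lam i + α) ^ 3

/-- modified Hanke-Raus functional `ψ_HR(α,z)`. -/
def psiHR (lam c : ℕ → ℝ) (q α : ℝ) : ℝ := Real.sqrt (psiHRsq lam c q α)

/-- squared predictive mean-square error functional
`ψ_PMS(α,y^δ)² = ‖T x_α^δ - y‖² = ∑ (λᵢ eᵢ - α √λᵢ xdagᵢ)²/(λᵢ+α)²`. -/
def psiPMSsq (lam xdag e : ℕ → ℝ) (α : ℝ) : ℝ :=
  ∑' i, (lam i * e i - α * Real.sqrt (lam i) * xdag i) ^ 2 / (lam i + α) ^ 2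

/-- predictive mean-square error functional `ψ_PMS(α,y^δ)`. -/
def psiPMS (lam xdag e : ℕ → ℝ) (α : ℝ) : ℝ := Real.sqrt (psiPMSsq lam xdag e α)

/-- the noise condition defining `N_ν`, with explicit constant `C`:
`α^{ν+1} ∫_α^{‖T‖²} λ⁻¹ d‖F_λ e‖² ≤ C ∫_0^α λ^ν d‖F_λ e‖²` for all `α ∈ (0,‖T‖²)`. -/
def noiseCondC (lam c : ℕ → ℝ) (Λ ν C : ℝ) : Prop :=
  ∀ α ∈ Set.Ioo (0 : ℝ) Λ,
    α ^ (ν + 1) * ∑' i, (if α < lam i then c i ^ 2 / lam i else 0)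
      ≤ C * ∑' i, (if lam i ≤ α then lam i ^ ν * c i ^ 2 else 0)

/-- membership in the noise class `N_ν`. -/
def memN (lam c : ℕ → ℝ) (Λ ν : ℝ) : Prop := ∃ C > 0, noiseCondC lam c Λ ν C

/-- the regularity condition on `x†`:
`α² ∫_α^∞ λ⁻² d‖E_λ x†‖² ≥ C ∫_0^α d‖E_λ x†‖²` for all `α ∈ (0,‖T‖²)`. -/
def regCond (lam xdag : ℕ → ℝ) (Λ : ℝ) : Prop :=
  ∃ C > 0, ∀ α ∈ Set.Ioo (0 : ℝ) Λ,
    C * ∑' i, (if lam i ≤ α then xdag i ^ 2 else 0)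
      ≤ α ^ 2 * ∑' i, (if α < lam i then xdag i ^ 2 / lam i ^ 2 else 0)

/-- the noise condition (regcon) with parameter `ε > 0` and explicit constant `C`:
`∫_α^{‖T‖²} d‖F_λ Q(y-y^δ)‖² ≥ C η²/α^{2p-ε}` for all `α ∈ (0,‖T‖²)`. -/
def regconC (lam e : ℕ → ℝ) (Λ p ε C : ℝ) : Prop :=
  ∀ α ∈ Set.Ioo (0 : ℝ) Λ,
    C * etaSq lam e p / α ^ (2 * p - ε) ≤ ∑' i, (if α < lam i then e i ^ 2 else 0)

/-- condition (xxx) with parameter `ε₂ > 0` and explicit constant `C`: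
`∫_α^{‖T‖²} λ^{2μ-1} d‖E_λ ω‖² ≥ C α^{2μ-1+ε₂}` for all `α ∈ (0,‖T‖²)`. -/
def xxxCondC (lam om : ℕ → ℝ) (Λ mu eps2 C : ℝ) : Prop :=
  ∀ α ∈ Set.Ioo (0 : ℝ) Λ,
    C * α ^ (2 * mu - 1 + eps2) ≤ ∑' i, (if α < lam i then lam i ^ (2 * mu - 1) * om i ^ 2 else 0)


/-- lower bound for the modified heuristic discrepancy functional
under the noise condition `N_{2q}`. -/
theorem statement6 (Λ p q : ℝ) (hΛ : 0 < Λ) (hp : p ∈ Set.Icc (0 : ℝ) (1 / 2))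
    (hpq : p ≤ q) (hq : q ≤ 1 / 2)
    (lam e : ℕ → ℝ) (hlam : ∀ i, 0 < lam i ∧ lam i ≤ Λ)
    (hη : Summable fun i => lam i ^ (2 * p) * e i ^ 2)
    (hN : memN lam e Λ (2 * q)) :
    ∃ C > 0, ∀ α ∈ Set.Ioo (0 : ℝ) Λ, C * dataErr lam e α ≤ psiHD lam e q α := by
  obtain ⟨C, hC, hNC⟩ := hN
  have hp0 : (0:ℝ) ≤ p := hp.1
  have hp2 : p ≤ 1/2 := hp.2
  refine ⟨1 / Real.sqrt (4 + 4 * C), by positivity, ?_⟩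
  intro α hα
  obtain ⟨hα0, hαΛ⟩ := hα
  -- the summands
  set f : ℕ → ℝ := fun i => lam i * e i ^ 2 / (lam i + α) ^ 2 with hfdef
  set ψ : ℕ → ℝ := fun i => lam i ^ (2*q) * α ^ (1 - 2*q) * e i ^ 2 / (lam i + α) ^ 2
    with hψdef
  have hψ0 : ∀ i, 0 ≤ ψ i := by
    intro i
    exact div_nonneg (mul_nonneg (mul_nonneg (Real.rpow_nonneg (hlam i).1.le _)
      (Real.rpow_nonneg hα0.le _)) (sq_nonneg _)) (sq_nonneg _)
  have hf0 : ∀ i, 0 ≤ f i := by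
    intro i
    exact div_nonneg (mul_nonneg (hlam i).1.le (sq_nonneg _)) (sq_nonneg _)
  have hden : ∀ i, (0:ℝ) < (lam i + α) ^ 2 := fun i => by
    have := (hlam i).1; positivity
  -- summability of ψ
  have hψle : ∀ i, ψ i ≤ (Λ ^ (2*q - 2*p) * α ^ (1 - 2*q) / α ^ 2)
      * (lam i ^ (2*p) * e i ^ 2) := by
    intro i
    have hL := (hlam i).1
    have hLΛ := (hlam i).2
    have h1 : lam i ^ (2*q) ≤ lam i ^ (2*p) * Λ ^ (2*q - 2*p) := by
      have : lam i ^ (2*q) = lam i ^ (2*p) * lam i ^ (2*q - 2*p) := by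
        rw [← Real.rpow_add hL, show 2*p + (2*q - 2*p) = 2*q by ring]
      rw [this]
      exact mul_le_mul_of_nonneg_left
        (Real.rpow_le_rpow hL.le hLΛ (show (0:ℝ) ≤ 2*q - 2*p by linarith)) (Real.rpow_nonneg hL.le _)
    have h2 : α ^ 2 ≤ (lam i + α) ^ 2 := by nlinarith
    calc ψ i ≤ (lam i ^ (2*p) * Λ ^ (2*q - 2*p)) * α ^ (1 - 2*q) * e i ^ 2 / α ^ 2 := by
          apply div_le_div₀ (by positivity) _ (by positivity) h2
          exact mul_le_mul_of_nonneg_right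
            (mul_le_mul_of_nonneg_right h1 (Real.rpow_nonneg hα0.le _)) (sq_nonneg _)
      _ = (Λ ^ (2*q - 2*p) * α ^ (1 - 2*q) / α ^ 2) * (lam i ^ (2*p) * e i ^ 2) := by
          ring
  have hsψ : Summable ψ :=
    Summable.of_nonneg_of_le hψ0 hψle (hη.mul_left _)
  -- summability of f
  have hfle : ∀ i, f i ≤ (Λ ^ (1 - 2*p) / α ^ 2) * (lam i ^ (2*p) * e i ^ 2) := by
    intro i
    have hL := (hlam i).1
    have hLΛ := (hlam i).2
    have h1 : lam i ≤ lam i ^ (2*p) * Λ ^ (1 - 2*p) := by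
      have : lam i = lam i ^ (2*p) * lam i ^ (1 - 2*p) := by
        rw [← Real.rpow_add hL, show 2*p + (1 - 2*p) = (1:ℝ) by ring, Real.rpow_one]
      refine this.trans_le ?_
      exact mul_le_mul_of_nonneg_left
        (Real.rpow_le_rpow hL.le hLΛ (show (0:ℝ) ≤ 1 - 2*p by linarith)) (Real.rpow_nonneg hL.le _)
    have h2 : α ^ 2 ≤ (lam i + α) ^ 2 := by nlinarith
    calc f i ≤ (lam i ^ (2*p) * Λ ^ (1 - 2*p)) * e i ^ 2 / α ^ 2 := by
          apply div_le_div₀ (by positivity) _ (by positivity) h2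
          exact mul_le_mul_of_nonneg_right h1 (sq_nonneg _)
      _ = (Λ ^ (1 - 2*p) / α ^ 2) * (lam i ^ (2*p) * e i ^ 2) := by ring
  have hsf : Summable f := Summable.of_nonneg_of_le hf0 hfle (hη.mul_left _)
  -- high and low frequency pieces
  set g : ℕ → ℝ := fun i => if lam i ≤ α then f i else 0 with hgdef
  set h : ℕ → ℝ := fun i => if α < lam i then e i ^ 2 / lam i else 0 with hhdef
  set low : ℕ → ℝ := fun i => if lam i ≤ α then lam i ^ (2*q) * e i ^ 2 else 0
    with hlowdef
  have hg0 : ∀ i, 0 ≤ g i := fun i => by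
    simp only [hgdef]; split_ifs with hc
    exacts [hf0 i, le_rfl]
  have hh0 : ∀ i, 0 ≤ h i := fun i => by
    simp only [hhdef]; split
    · exact div_nonneg (sq_nonneg _) (hlam i).1.le
    · exact le_rfl
  have hlow0 : ∀ i, 0 ≤ low i := fun i => by
    simp only [hlowdef]; split
    · exact mul_nonneg (Real.rpow_nonneg (hlam i).1.le _) (sq_nonneg _)
    · exact le_rfl
  have hsg : Summable g := Summable.of_nonneg_of_le hg0
    (fun i => by simp only [hgdef]; split <;> simp [hf0 i]) hsf
  have hsh : Summable h := by
    apply Summable.of_nonneg_of_le hh0 _ (hη.mul_left (α ^ (-(1 + 2*p))))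
    intro i
    have hL := (hlam i).1
    simp only [hhdef]
    split
    · rename_i hil
      have h1 : e i ^ 2 / lam i = lam i ^ (-(1:ℝ)) * e i ^ 2 := by
        rw [Real.rpow_neg_one]; ring
      rw [h1]
      have h2 : lam i ^ (-(1:ℝ)) = lam i ^ (2*p) * lam i ^ (-(1 + 2*p)) := by
        rw [← Real.rpow_add hL, show 2*p + -(1 + 2*p) = -(1:ℝ) by ring]
      rw [h2]
      have h3 : lam i ^ (-(1 + 2*p)) ≤ α ^ (-(1 + 2*p)) :=
        Real.rpow_le_rpow_of_nonpos hα0 hil.le (by linarith)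
      calc lam i ^ (2*p) * lam i ^ (-(1 + 2*p)) * e i ^ 2
          ≤ lam i ^ (2*p) * α ^ (-(1 + 2*p)) * e i ^ 2 :=
            mul_le_mul_of_nonneg_right
              (mul_le_mul_of_nonneg_left h3 (Real.rpow_nonneg hL.le _)) (sq_nonneg _)
        _ = α ^ (-(1 + 2*p)) * (lam i ^ (2*p) * e i ^ 2) := by ring
    · positivity
  have hslow : Summable low := by
    apply Summable.of_nonneg_of_le hlow0 _ (hη.mul_left (Λ ^ (2*q - 2*p)))
    intro i
    have hL := (hlam i).1
    have hLΛ := (hlam i).2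
    simp only [hlowdef]
    split
    · have h1 : lam i ^ (2*q) ≤ Λ ^ (2*q - 2*p) * lam i ^ (2*p) := by
        have : lam i ^ (2*q) = lam i ^ (2*q - 2*p) * lam i ^ (2*p) := by
          rw [← Real.rpow_add hL, show 2*q - 2*p + 2*p = 2*q by ring]
        rw [this]
        exact mul_le_mul_of_nonneg_right
          (Real.rpow_le_rpow hL.le hLΛ (show (0:ℝ) ≤ 2*q - 2*p by linarith)) (Real.rpow_nonneg hL.le _)
      calc lam i ^ (2*q) * e i ^ 2 ≤ Λ ^ (2*q - 2*p) * lam i ^ (2*p) * e i ^ 2 :=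
            mul_le_mul_of_nonneg_right h1 (sq_nonneg _)
        _ = Λ ^ (2*q - 2*p) * (lam i ^ (2*p) * e i ^ 2) := by ring
    · positivity
  -- pointwise splitting: f ≤ g + h
  have hfgh : ∀ i, f i ≤ g i + h i := by
    intro i
    have hL := (hlam i).1
    by_cases hcase : lam i ≤ α
    · simp only [hgdef, hhdef, if_pos hcase, if_neg (not_lt.2 hcase), add_zero]
      exact le_rfl
    · push_neg at hcase
      simp only [hgdef, hhdef, if_neg (not_le.2 hcase), if_pos hcase, zero_add]
      rw [div_le_div_iff₀ (hden i) hL]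
      nlinarith [sq_nonneg (e i), sq_nonneg (lam i + α), sq_nonneg α,
        mul_pos hL hα0]
  -- low frequency: g ≤ ψ pointwise
  have hgψ : ∀ i, g i ≤ ψ i := by
    intro i
    have hL := (hlam i).1
    simp only [hgdef]
    split
    · rename_i hil
      simp only [hfdef, hψdef]
      apply div_le_div₀ (by positivity) _ (hden i) le_rfl
      have h1 : lam i ≤ lam i ^ (2*q) * α ^ (1 - 2*q) := by
        have heq : lam i = lam i ^ (2*q) * lam i ^ (1 - 2*q) := by
          rw [← Real.rpow_add hL, show 2*q + (1 - 2*q) = (1:ℝ) by ring, Real.rpow_one]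
        refine heq.trans_le ?_
        exact mul_le_mul_of_nonneg_left
          (Real.rpow_le_rpow hL.le hil (show (0:ℝ) ≤ 1 - 2*q by linarith)) (Real.rpow_nonneg hL.le _)
      exact mul_le_mul_of_nonneg_right h1 (sq_nonneg _)
    · exact hψ0 i
  -- low-frequency bound for the noise-condition sum
  have hαpow : (0:ℝ) < α ^ (2*q + 1) := Real.rpow_pos_of_pos hα0 _
  have hlowψ : ∀ i, low i ≤ α ^ (2*q + 1) * (4 * ψ i) := by
    intro i
    have hL := (hlam i).1
    simp only [hlowdef]
    split
    · rename_i hil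
      simp only [hψdef]
      have hαα : α ^ (2*q + 1) * α ^ (1 - 2*q) = α ^ 2 := by
        rw [← Real.rpow_add hα0]
        rw [show (2*q + 1) + (1 - 2*q) = ((2:ℕ):ℝ) by push_cast; ring,
          Real.rpow_natCast]
      have key : lam i ^ (2*q) * e i ^ 2 * (lam i + α) ^ 2
          ≤ α ^ (2*q + 1) * (4 * (lam i ^ (2*q) * α ^ (1 - 2*q) * e i ^ 2)) := by
        have h2 : (lam i + α) ^ 2 ≤ 4 * α ^ 2 := by nlinarith
        calc lam i ^ (2*q) * e i ^ 2 * (lam i + α) ^ 2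
            ≤ lam i ^ (2*q) * e i ^ 2 * (4 * α ^ 2) :=
              mul_le_mul_of_nonneg_left h2
                (mul_nonneg (Real.rpow_nonneg hL.le _) (sq_nonneg _))
          _ = α ^ (2*q + 1) * (4 * (lam i ^ (2*q) * α ^ (1 - 2*q) * e i ^ 2)) := by
              rw [show α ^ (2*q + 1) * (4 * (lam i ^ (2*q) * α ^ (1 - 2*q) * e i ^ 2))
                = lam i ^ (2*q) * e i ^ 2 * (4 * (α ^ (2*q + 1) * α ^ (1 - 2*q)))
                by ring, hαα]
        
      calc lam i ^ (2*q) * e i ^ 2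
          = lam i ^ (2*q) * e i ^ 2 * (lam i + α) ^ 2 / (lam i + α) ^ 2 := by
            field_simp
        _ ≤ α ^ (2*q + 1) * (4 * (lam i ^ (2*q) * α ^ (1 - 2*q) * e i ^ 2))
              / (lam i + α) ^ 2 := by
            apply div_le_div₀ _ key (hden i) le_rfl
            positivity
        _ ≤ α ^ (2*q + 1) * (4 * (lam i ^ (2*q) * α ^ (1 - 2*q) * e i ^ 2
              / (lam i + α) ^ 2)) := by
            rw [mul_div_assoc, mul_div_assoc]
    · positivity
  -- put everything together at the level of sums
  have hψsum0 : 0 ≤ ∑' i, ψ i := tsum_nonneg hψ0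
  have step1 : dataErrSq lam e α ≤ (∑' i, g i) + ∑' i, h i := by
    rw [← Summable.tsum_add hsg hsh]
    exact Summable.tsum_le_tsum hfgh hsf (hsg.add hsh)
  have step2 : (∑' i, g i) ≤ ∑' i, ψ i := Summable.tsum_le_tsum hgψ hsg hsψ
  have step3 : (∑' i, h i) ≤ 4 * C * ∑' i, ψ i := by
    have hNα := hNC α ⟨hα0, hαΛ⟩
    have hlowsum : (∑' i, low i) ≤ α ^ (2*q + 1) * (4 * ∑' i, ψ i) := by
      calc (∑' i, low i) ≤ ∑' i, α ^ (2*q + 1) * (4 * ψ i) :=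
            Summable.tsum_le_tsum hlowψ hslow (by exact ((hsψ.mul_left 4).mul_left _))
        _ = α ^ (2*q + 1) * (4 * ∑' i, ψ i) := by
            rw [tsum_mul_left, tsum_mul_left]
    have : α ^ (2*q + 1) * ∑' i, h i ≤ C * (α ^ (2*q + 1) * (4 * ∑' i, ψ i)) := by
      calc α ^ (2*q + 1) * ∑' i, h i ≤ C * ∑' i, low i := hNα
        _ ≤ C * (α ^ (2*q + 1) * (4 * ∑' i, ψ i)) :=
            mul_le_mul_of_nonneg_left hlowsum hC.le
    have h4 := (mul_le_mul_iff_right₀ hαpow).1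
      (by linarith [this] : α ^ (2*q + 1) * ∑' i, h i
        ≤ α ^ (2*q + 1) * (C * (4 * ∑' i, ψ i)))
    linarith
  have main : dataErrSq lam e α ≤ (4 + 4 * C) * psiHDsq lam e q α := by
    have : psiHDsq lam e q α = ∑' i, ψ i := rfl
    rw [this]
    nlinarith [step1, step2, step3, hψsum0]
  -- conclude with square roots
  have hs4 : (0:ℝ) < Real.sqrt (4 + 4 * C) := Real.sqrt_pos.2 (by linarith)
  have hsq : dataErr lam e α ≤ Real.sqrt (4 + 4 * C) * psiHD lam e q α := by
    have := Real.sqrt_le_sqrt main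
    rwa [Real.sqrt_mul (by linarith) _] at this
  rw [div_mul_eq_mul_div, one_mul, div_le_iff₀ hs4]
  calc dataErr lam e α ≤ Real.sqrt (4 + 4 * C) * psiHD lam e q α := hsq
    _ = psiHD lam e q α * Real.sqrt (4 + 4 * C) := mul_comm _ _


end WeakNoise
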